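/- Let $\ket{\psi^B_{a|x}}$ be the vectors in $\mathbb{C}^d$ defined by $\ket{\psi^B_{a|1}}=\ket{a}$ and, for $x\ne 1$, $\ket{\psi^B_{a|x}}=\sum_{j=0}^{d-1}\sqrt{\lambda_j}\,e^{-i\phi^j_{a|x}}\ket{j}$, where $\lambda_j\ge0$, $\sum_j\lambda_j=1$, and the phases arise from a collection of mutually unbiased bases $\ket{A_{a|x}}=\frac{1}{\sqrt d}\sum_j e^{i\phi^j_{a|x}}\ket j$ satisfying $|\langle A_{a|x}|A_{a'|x'}\rangle|=1/\sqrt d$ for $x\ne x'$. Then for any real $\lambda \ge 0$ and any $x\ne x'$ with $x,x'\ne 1$: $|\langle\psi^B_{a|x}|\psi^B_{a'|x'}\rangle| \le \sum_{j=0}^{d-1}|\lambda_j-\lambda| + \lambda\sqrt d$. -/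

import Mathlib

open Complex Finset in
/-- Overlap bound for the post-measurement states of MUB measurements:
if `|A_{a|x}⟩ = (1/√d) ∑ⱼ e^{i φ^j_{a|x}} |j⟩` form mutually unbiased bases and
`|ψ_{a|x}⟩ = ∑ⱼ √λⱼ e^{-i φ^j_{a|x}} |j⟩`, then for `x ≠ x'` and any `λ ≥ 0`,
`|⟨ψ_{a|x}|ψ_{a'|x'}⟩| ≤ ∑ⱼ |λⱼ - λ| + λ √d`. -/
theorem mub_post_measurement_overlap_bound
    (d : ℕ) (hd : 1 ≤ d) {X : Type*}
    (lam : Fin d → ℝ) (hlam0 : ∀ j, 0 ≤ lam j) (hlam1 : ∑ j, lam j = 1)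
    (φ : X → Fin d → Fin d → ℝ)
    (A : X → Fin d → Fin d → ℂ)
    (hA : ∀ x a j, A x a j = (1 / Real.sqrt d : ℝ) * Complex.exp (Complex.I * (φ x a j)))
    (hMUB : ∀ x x' a a', x ≠ x' →
      ‖∑ j, (starRingEnd ℂ) (A x a j) * A x' a' j‖ = 1 / Real.sqrt d)
    (ψ : X → Fin d → Fin d → ℂ)
    (hψ : ∀ x a j, ψ x a j = (Real.sqrt (lam j) : ℝ) * Complex.exp (-Complex.I * (φ x a j))) :
    ∀ lam0 : ℝ, 0 ≤ lam0 → ∀ x x' : X, x ≠ x' → ∀ a a' : Fin d,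
      ‖∑ j, (starRingEnd ℂ) (ψ x a j) * ψ x' a' j‖ ≤
        (∑ j, |lam j - lam0|) + lam0 * Real.sqrt d := by
  intro lam0 hlam0' x x' hxx a a'
  have hdpos : (0 : ℝ) < d := by exact_mod_cast hd
  have hsd : (0 : ℝ) < Real.sqrt d := Real.sqrt_pos.mpr hdpos
  set z : Fin d → ℂ := fun j => Complex.exp (Complex.I * ((φ x a j : ℂ) - (φ x' a' j : ℂ)))
    with hz
  have hznorm : ∀ j, ‖z j‖ = 1 := by
    intro j
    rw [hz]
    rw [Complex.norm_exp]
    have : (Complex.I * ((φ x a j : ℂ) - (φ x' a' j : ℂ))).re = 0 := by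
      simp [Complex.mul_re]
    rw [this, Real.exp_zero]
  -- rewrite the ψ inner product
  have hterm : ∀ j, (starRingEnd ℂ) (ψ x a j) * ψ x' a' j = (lam j : ℂ) * z j := by
    intro j
    rw [hψ, hψ, hz]
    have h1 : (starRingEnd ℂ) ((Real.sqrt (lam j) : ℂ) * Complex.exp (-Complex.I * (φ x a j)))
        = (Real.sqrt (lam j) : ℂ) * Complex.exp (Complex.I * (φ x a j)) := by
      rw [map_mul, Complex.conj_ofReal, ← Complex.exp_conj]
      congr 2
      simp [map_mul, Complex.conj_ofReal]
    rw [h1]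
    have h2 : (Real.sqrt (lam j) : ℂ) * (Real.sqrt (lam j) : ℂ) = (lam j : ℂ) := by
      rw [← Complex.ofReal_mul, Real.mul_self_sqrt (hlam0 j)]
    calc (Real.sqrt (lam j) : ℂ) * Complex.exp (Complex.I * (φ x a j)) *
          ((Real.sqrt (lam j) : ℂ) * Complex.exp (-Complex.I * (φ x' a' j)))
        = ((Real.sqrt (lam j) : ℂ) * (Real.sqrt (lam j) : ℂ)) *
          (Complex.exp (Complex.I * (φ x a j)) * Complex.exp (-Complex.I * (φ x' a' j))) := by
          ring
      _ = (lam j : ℂ) * Complex.exp (Complex.I * ((φ x a j : ℂ) - (φ x' a' j : ℂ))) := by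
          rw [h2, ← Complex.exp_add]
          congr 2
          ring
  -- the MUB condition gives ‖∑ z j‖ = √d
  have hAterm : ∀ j, (starRingEnd ℂ) (A x' a' j) * A x a j = ((1 : ℂ)/ (d : ℂ)) * z j := by
    intro j
    rw [hA, hA, hz]
    have h1 : (starRingEnd ℂ) (((1 / Real.sqrt d : ℝ) : ℂ) * Complex.exp (Complex.I * (φ x' a' j)))
        = ((1 / Real.sqrt d : ℝ) : ℂ) * Complex.exp (-Complex.I * (φ x' a' j)) := by
      rw [map_mul, Complex.conj_ofReal, ← Complex.exp_conj]
      congr 1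
      simp [map_mul, Complex.conj_ofReal, Complex.conj_I]
      try ring
    rw [h1]
    have h2 : ((1 / Real.sqrt d : ℝ) : ℂ) * ((1 / Real.sqrt d : ℝ) : ℂ) = (1 : ℂ) / (d : ℂ) := by
      rw [← Complex.ofReal_mul, div_mul_div_comm, one_mul, Real.mul_self_sqrt hdpos.le]
      push_cast
      ring
    calc ((1 / Real.sqrt d : ℝ) : ℂ) * Complex.exp (-Complex.I * (φ x' a' j)) *
          (((1 / Real.sqrt d : ℝ) : ℂ) * Complex.exp (Complex.I * (φ x a j)))
        = (((1 / Real.sqrt d : ℝ) : ℂ) * ((1 / Real.sqrt d : ℝ) : ℂ)) *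
          (Complex.exp (-Complex.I * (φ x' a' j)) * Complex.exp (Complex.I * (φ x a j))) := by
          ring
      _ = ((1:ℂ) / (d : ℂ)) * Complex.exp (Complex.I * ((φ x a j : ℂ) - (φ x' a' j : ℂ))) := by
          rw [h2, ← Complex.exp_add]
          congr 2
          ring
  have hsum : ‖∑ j, z j‖ = Real.sqrt d := by
    have h := hMUB x' x a' a (Ne.symm hxx)
    have heq : ∑ j, (starRingEnd ℂ) (A x' a' j) * A x a j = ((1:ℂ)/(d:ℂ)) * ∑ j, z j := by
      rw [Finset.mul_sum]
      exact Finset.sum_congr rfl fun j _ => hAterm j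
    rw [heq] at h
    rw [norm_mul] at h
    have hnd : ‖(1:ℂ)/(d:ℂ)‖ = 1 / (d:ℝ) := by
      simp [norm_div]
    rw [hnd] at h
    have h' : ‖∑ j, z j‖ = (d : ℝ) / Real.sqrt d := by
      field_simp at h
      rw [eq_div_iff hsd.ne']
      exact h
    rw [h', Real.div_sqrt]
  -- main estimate
  have hdecomp : ∑ j, (starRingEnd ℂ) (ψ x a j) * ψ x' a' j
      = (∑ j, ((lam j - lam0 : ℝ) : ℂ) * z j) + (lam0 : ℂ) * ∑ j, z j := by
    rw [Finset.mul_sum, ← Finset.sum_add_distrib]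
    refine Finset.sum_congr rfl fun j _ => ?_
    rw [hterm j]
    push_cast
    ring
  rw [hdecomp]
  calc ‖(∑ j, ((lam j - lam0 : ℝ) : ℂ) * z j) + (lam0 : ℂ) * ∑ j, z j‖
      ≤ ‖∑ j, ((lam j - lam0 : ℝ) : ℂ) * z j‖ + ‖(lam0 : ℂ) * ∑ j, z j‖ := norm_add_le _ _
    _ ≤ (∑ j, |lam j - lam0|) + lam0 * Real.sqrt d := by
        gcongr
        · calc ‖∑ j, ((lam j - lam0 : ℝ) : ℂ) * z j‖
              ≤ ∑ j, ‖((lam j - lam0 : ℝ) : ℂ) * z j‖ := norm_sum_le _ _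
            _ = ∑ j, |lam j - lam0| := by
                refine Finset.sum_congr rfl fun j _ => ?_
                rw [norm_mul, hznorm j, mul_one, Complex.norm_real, Real.norm_eq_abs]
        · rw [norm_mul, hsum, Complex.norm_real, Real.norm_eq_abs, _root_.abs_of_nonneg hlam0']
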